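/- Let P be a partial latin square of order n. Suppose a symbol σ is missing from exactly k rows and exactly k columns of P (and present in every other row and column), and T is a set of empty cells of P containing exactly t cells that support σ. Then α(σ,T) ≥ ⌈t/k⌉. -/

import Mathlib

open scoped Classical

section PLS

variable {n : ℕ}

/-- A partial latin square of order `n`: an `n × n` array of optional symbols,
no symbol occurring twice in any row or column. -/
def IsPLS (n : ℕ) (P : Fin n → Fin n → Option (Fin n)) : Prop :=
  (∀ i j j' σ, P i j = some σ → P i j' = some σ → j = j') ∧
  (∀ i i' j σ, P i j = some σ → P i' j = some σ → i = i')

/-- `σ` is missing from row `i`. -/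
def MissingRow (P : Fin n → Fin n → Option (Fin n)) (σ i : Fin n) : Prop :=
  ∀ j, P i j ≠ some σ

/-- `σ` is missing from column `j`. -/
def MissingCol (P : Fin n → Fin n → Option (Fin n)) (σ j : Fin n) : Prop :=
  ∀ i, P i j ≠ some σ

/-- A cell supports `σ` if it contains `σ`, or is empty and `σ` is missing from
its row and column. -/
def Supports (P : Fin n → Fin n → Option (Fin n)) (σ : Fin n) (c : Fin n × Fin n) : Prop :=
  P c.1 c.2 = some σ ∨ (P c.1 c.2 = none ∧ MissingRow P σ c.1 ∧ MissingCol P σ c.2)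

/-- A set of cells is independent if no two share a row or a column. -/
def IndepCells (S : Finset (Fin n × Fin n)) : Prop :=
  ∀ c ∈ S, ∀ c' ∈ S, c ≠ c' → c.1 ≠ c'.1 ∧ c.2 ≠ c'.2

/-- `alpha P σ T` : max size of an independent subset of `T` all of whose cells support `σ`. -/
noncomputable def alpha (P : Fin n → Fin n → Option (Fin n)) (σ : Fin n)
    (T : Finset (Fin n × Fin n)) : ℕ :=
  (T.powerset.filter (fun S => IndepCells S ∧ ∀ c ∈ S, Supports P σ c)).sup Finset.card

/-- Hall's Condition: every set of cells satisfies the Hall Inequality. -/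
def HallCond (n : ℕ) (P : Fin n → Fin n → Option (Fin n)) : Prop :=
  ∀ T : Finset (Fin n × Fin n), T.card ≤ ∑ σ : Fin n, alpha P σ T

/-- A latin square of order `n`. -/
def IsLatin (n : ℕ) (L : Fin n → Fin n → Fin n) : Prop :=
  (∀ i, Function.Injective (L i)) ∧ (∀ j, Function.Injective fun i => L i j)

/-- `L` is a completion of `P`. -/
def Completes (n : ℕ) (P : Fin n → Fin n → Option (Fin n)) (L : Fin n → Fin n → Fin n) : Prop :=
  IsLatin n L ∧ ∀ i j σ, P i j = some σ → L i j = σ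

end PLS

theorem stmt3 (n k t : ℕ) (P : Fin n → Fin n → Option (Fin n)) (hP : IsPLS n P)
    (σ : Fin n)
    (hrow : (Finset.univ.filter (fun i => MissingRow P σ i)).card = k)
    (hcol : (Finset.univ.filter (fun j => MissingCol P σ j)).card = k)
    (T : Finset (Fin n × Fin n)) (hempty : ∀ c ∈ T, P c.1 c.2 = none)
    (ht : (T.filter (fun c => Supports P σ c)).card = t) :
    ⌈(t : ℚ) / (k : ℚ)⌉ ≤ (alpha P σ T : ℤ) := by
  classical
  set A := Finset.univ.filter (fun i => MissingRow P σ i) with hA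
  set B := Finset.univ.filter (fun j => MissingCol P σ j) with hB
  set S := T.filter (fun c => Supports P σ c) with hSdef
  have hS : ∀ c ∈ S, c ∈ T ∧ MissingRow P σ c.1 ∧ MissingCol P σ c.2 := by
    intro c hc
    rw [hSdef, Finset.mem_filter] at hc
    obtain ⟨hcT, hsup⟩ := hc
    rcases hsup with h | h
    · exact absurd (hempty c hcT) (by rw [h]; simp)
    · exact ⟨hcT, h.2⟩
  have hSA : ∀ c ∈ S, c.1 ∈ A := by
    intro c hc; rw [hA, Finset.mem_filter]; exact ⟨Finset.mem_univ _, (hS c hc).2.1⟩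
  have hSB : ∀ c ∈ S, c.2 ∈ B := by
    intro c hc; rw [hB, Finset.mem_filter]; exact ⟨Finset.mem_univ _, (hS c hc).2.2⟩
  -- degree bounds
  have hrowdeg : ∀ i : Fin n, (S.filter (fun c => c.1 = i)).card ≤ k := by
    intro i
    rw [← hcol]
    apply Finset.card_le_card_of_injOn Prod.snd
    · intro c hc
      rw [Finset.mem_coe, Finset.mem_filter] at hc
      exact hSB c hc.1
    · intro c hc c' hc' h
      rw [Finset.mem_coe, Finset.mem_filter] at hc hc'
      exact Prod.ext (hc.2.trans hc'.2.symm) h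
  have hcoldeg : ∀ j : Fin n, (S.filter (fun c => c.2 = j)).card ≤ k := by
    intro j
    rw [← hrow]
    apply Finset.card_le_card_of_injOn Prod.fst
    · intro c hc
      rw [Finset.mem_coe, Finset.mem_filter] at hc
      exact hSA c hc.1
    · intro c hc c' hc' h
      rw [Finset.mem_coe, Finset.mem_filter] at hc hc'
      exact Prod.ext h (hc.2.trans hc'.2.symm)
  -- t ≤ k * k
  have htk : t ≤ k * k := by
    have : S.card ≤ (A ×ˢ B).card := by
          apply Finset.card_le_card
          intro c hc
          rw [Finset.mem_product]
          exact ⟨hSA c hc, hSB c hc⟩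
    rw [Finset.card_product, hrow, hcol, ht] at this
    exact this
  -- trivial cases
  rcases Nat.eq_zero_or_pos k with hk0 | hkpos
  · have ht0 : t = 0 := by rw [hk0] at htk; omega
    subst ht0
    simp
  rcases Nat.eq_zero_or_pos t with ht0 | htpos
  · subst ht0
    simp
  -- main case
  set s := (t - 1) / k + 1 with hsdef
  have hq : k * ((t - 1) / k) ≤ t - 1 := by
    rw [mul_comm]; exact Nat.div_mul_le_self _ _
  have hks : k * s = k * ((t - 1) / k) + k := by
    rw [hsdef, Nat.mul_add, Nat.mul_one]
  have hts : t ≤ k * s := by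
    have h1 := Nat.div_add_mod (t - 1) k
    have h2 := Nat.mod_lt (t - 1) hkpos
    omega
  have hst : k * (s - 1) < t := by
    have hs1 : s - 1 = (t - 1) / k := by rw [hsdef, Nat.add_sub_cancel]
    rw [hs1]
    exact lt_of_le_of_lt hq (by omega)
  have hsk : s ≤ k := by
    have : (t - 1) / k < k := by
      rw [Nat.div_lt_iff_lt_mul hkpos]
      omega
    omega
  -- neighborhoods
  set Ni : Fin n → Finset (Fin n) := fun i => (S.filter (fun c => c.1 = i)).image Prod.snd with hNi
  -- counting lemma
  have hcount : ∀ W : Finset (Fin n), W ⊆ A →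
      t ≤ k * (W.biUnion Ni).card + k * (A \ W).card := by
    intro W hW
    have hsub : S ⊆ (W.biUnion Ni).biUnion (fun j => S.filter (fun c => c.2 = j)) ∪
        (A \ W).biUnion (fun i => S.filter (fun c => c.1 = i)) := by
      intro c hc
      rw [Finset.mem_union]
      by_cases h1 : c.1 ∈ W
      · left
        rw [Finset.mem_biUnion]
        refine ⟨c.2, ?_, ?_⟩
        · rw [Finset.mem_biUnion]
          exact ⟨c.1, h1, by rw [hNi]; exact Finset.mem_image_of_mem _ (by simp [hc])⟩
        · simp [hc]
      · right
        rw [Finset.mem_biUnion]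
        exact ⟨c.1, Finset.mem_sdiff.mpr ⟨hSA c hc, h1⟩, by simp [hc]⟩
    calc t = S.card := ht.symm
      _ ≤ _ := Finset.card_le_card hsub
      _ ≤ ((W.biUnion Ni).biUnion (fun j => S.filter (fun c => c.2 = j))).card +
            ((A \ W).biUnion (fun i => S.filter (fun c => c.1 = i))).card :=
          Finset.card_union_le _ _
      _ ≤ (W.biUnion Ni).card * k + (A \ W).card * k := by
          gcongr
          · calc _ ≤ ∑ j ∈ W.biUnion Ni, (S.filter (fun c => c.2 = j)).card :=
                Finset.card_biUnion_le
              _ ≤ (W.biUnion Ni).card • k :=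
                Finset.sum_le_card_nsmul _ _ k (fun j _ => hcoldeg j)
              _ = (W.biUnion Ni).card * k := by rw [smul_eq_mul]
          · calc _ ≤ ∑ i ∈ A \ W, (S.filter (fun c => c.1 = i)).card :=
                Finset.card_biUnion_le
              _ ≤ (A \ W).card • k :=
                Finset.sum_le_card_nsmul _ _ k (fun i _ => hrowdeg i)
              _ = (A \ W).card * k := by rw [smul_eq_mul]
      _ = k * (W.biUnion Ni).card + k * (A \ W).card := by ring
  -- Hall setup
  set Dum : Finset ℕ := Finset.range (k - s) with hDum
  set N' : Fin n → Finset (Fin n ⊕ ℕ) := fun i =>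
    if i ∈ A then (Ni i).image Sum.inl ∪ Dum.image Sum.inr
    else (Finset.univ : Finset (Fin n)).image Sum.inl ∪ (Finset.range n).image Sum.inr with hN'
  have hspos : 1 ≤ s := by rw [hsdef]; exact Nat.le_add_left 1 _
  have hall : ∀ W : Finset (Fin n), W.card ≤ (W.biUnion N').card := by
    intro W
    by_cases hWA : W ⊆ A
    · rcases W.eq_empty_or_nonempty with rfl | hWne
      · simp
      have hsub : ((W.biUnion Ni).image Sum.inl ∪ Dum.image Sum.inr : Finset (Fin n ⊕ ℕ)) ⊆
          W.biUnion N' := by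
        intro x hx
        rw [Finset.mem_union] at hx
        rcases hx with hx | hx
        · rw [Finset.mem_image] at hx
          obtain ⟨j, hj, rfl⟩ := hx
          rw [Finset.mem_biUnion] at hj ⊢
          obtain ⟨i, hi, hji⟩ := hj
          refine ⟨i, hi, ?_⟩
          rw [hN']
          simp only [if_pos (hWA hi)]
          exact Finset.mem_union_left _ (Finset.mem_image_of_mem _ hji)
        · obtain ⟨i, hi⟩ := hWne
          rw [Finset.mem_biUnion]
          refine ⟨i, hi, ?_⟩
          rw [hN']
          simp only [if_pos (hWA hi)]
          exact Finset.mem_union_right _ hx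
      have hdisj : Disjoint ((W.biUnion Ni).image Sum.inl : Finset (Fin n ⊕ ℕ))
          (Dum.image Sum.inr) := by
        simp [Finset.disjoint_left]
      have hcard : (W.biUnion Ni).card + (k - s) ≤ (W.biUnion N').card := by
        calc (W.biUnion Ni).card + (k - s)
            = ((W.biUnion Ni).image Sum.inl).card + (Dum.image Sum.inr).card := by
              rw [Finset.card_image_of_injective _ Sum.inl_injective,
                Finset.card_image_of_injective _ Sum.inr_injective, hDum, Finset.card_range]
          _ = (((W.biUnion Ni).image Sum.inl) ∪ Dum.image Sum.inr).card :=
              (Finset.card_union_of_disjoint hdisj).symm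
          _ ≤ _ := Finset.card_le_card hsub
      have hc := hcount W hWA
      have hAW : (A \ W).card = k - W.card := by rw [Finset.card_sdiff_of_subset hWA, hrow]
      have hWk : W.card ≤ k := by rw [← hrow]; exact Finset.card_le_card hWA
      rw [hAW] at hc
      have hkey : s - 1 < (W.biUnion Ni).card + (k - W.card) := by
        by_contra hcon
        push_neg at hcon
        have h2 : k * ((W.biUnion Ni).card + (k - W.card)) ≤ k * (s - 1) :=
          Nat.mul_le_mul_left k hcon
        rw [Nat.mul_add] at h2
        omega
      omega
    · rw [Finset.not_subset] at hWA
      obtain ⟨i0, hi0W, hi0A⟩ := hWA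
      have h1 : (Finset.univ : Finset (Fin n)).image Sum.inl ⊆ W.biUnion N' := by
        intro x hx
        rw [Finset.mem_biUnion]
        refine ⟨i0, hi0W, ?_⟩
        rw [hN']
        simp only [if_neg hi0A]
        exact Finset.mem_union_left _ hx
      calc W.card ≤ Fintype.card (Fin n) := Finset.card_le_univ W
        _ = ((Finset.univ : Finset (Fin n)).image Sum.inl).card := by
            rw [Finset.card_image_of_injective _ Sum.inl_injective, Finset.card_univ]
        _ ≤ _ := Finset.card_le_card h1
  obtain ⟨f, hfinj, hf⟩ := (Finset.all_card_le_biUnion_card_iff_exists_injective N').mp hall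
  set M := S.filter (fun c => f c.1 = Sum.inl c.2) with hM
  have hMS : M ⊆ S := Finset.filter_subset _ _
  have hindep : IndepCells M := by
    intro c hc c' hc' hne
    rw [hM, Finset.mem_filter] at hc hc'
    constructor
    · intro h1
      apply hne
      have h2 : c.2 = c'.2 := Sum.inl_injective (by rw [← hc.2, ← hc'.2, h1])
      exact Prod.ext h1 h2
    · intro h2
      apply hne
      have h1 : c.1 = c'.1 := hfinj (by rw [hc.2, hc'.2, h2])
      exact Prod.ext h1 h2
  have hMcard : s ≤ M.card := by
    set A' := A.filter (fun i => ∃ j : Fin n, f i = Sum.inl j) with hA'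
    have hsplit : A'.card + (A.filter (fun i => ¬ ∃ j : Fin n, f i = Sum.inl j)).card = k := by
      rw [← hrow]
      exact Finset.card_filter_add_card_filter_not _
    have hbad : (A.filter (fun i => ¬ ∃ j : Fin n, f i = Sum.inl j)).card ≤ k - s := by
      have hmaps : ∀ i ∈ A.filter (fun i => ¬ ∃ j : Fin n, f i = Sum.inl j),
          f i ∈ Dum.image Sum.inr := by
        intro i hi
        rw [Finset.mem_filter] at hi
        have hfi := hf i
        rw [hN'] at hfi
        simp only [if_pos hi.1] at hfi
        rw [Finset.mem_union] at hfi
        rcases hfi with h | h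
        · rw [Finset.mem_image] at h
          obtain ⟨j, _, hj⟩ := h
          exact absurd ⟨j, hj.symm⟩ hi.2
        · exact h
      calc _ ≤ (Dum.image Sum.inr).card :=
            Finset.card_le_card_of_injOn f hmaps (fun a _ b _ h => hfinj h)
        _ = k - s := by
            rw [Finset.card_image_of_injective _ Sum.inr_injective, hDum, Finset.card_range]
    have hA'M : A' ⊆ M.image Prod.fst := by
      intro i hi
      rw [hA', Finset.mem_filter] at hi
      obtain ⟨hiA, j, hj⟩ := hi
      have hfi := hf i
      rw [hN'] at hfi
      simp only [if_pos hiA] at hfi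
      rw [hj, Finset.mem_union] at hfi
      have hjNi : j ∈ Ni i := by
        rcases hfi with h | h
        · rw [Finset.mem_image] at h
          obtain ⟨j', hj', he⟩ := h
          rw [Sum.inl.injEq] at he
          rwa [← he]
        · simp at h
      rw [hNi] at hjNi
      simp only [Finset.mem_image, Finset.mem_filter] at hjNi
      obtain ⟨c, ⟨hcS, hc1⟩, hc2⟩ := hjNi
      have hcij : c = (i, j) := Prod.ext hc1 hc2
      rw [Finset.mem_image]
      refine ⟨c, ?_, hc1⟩
      rw [hM, Finset.mem_filter]
      refine ⟨hcS, ?_⟩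
      rw [hcij]
      exact hj
    have h1 : A'.card ≤ (M.image Prod.fst).card := Finset.card_le_card hA'M
    have h2 : (M.image Prod.fst).card ≤ M.card := Finset.card_image_le
    omega
  have halpha : M.card ≤ alpha P σ T := by
    apply Finset.le_sup
    rw [Finset.mem_filter, Finset.mem_powerset]
    exact ⟨hMS.trans (Finset.filter_subset _ _), hindep,
      fun c hc => (Finset.mem_filter.mp (hMS hc)).2⟩
  have hfin : t ≤ k * alpha P σ T :=
    le_trans hts (Nat.mul_le_mul_left k (le_trans hMcard halpha))
  rw [Int.ceil_le]
  rw [div_le_iff₀ (by exact_mod_cast hkpos : (0:ℚ) < (k:ℚ))]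
  push_cast
  calc (t:ℚ) ≤ ((k * alpha P σ T : ℕ) : ℚ) := by exact_mod_cast hfin
    _ = (alpha P σ T : ℚ) * (k : ℚ) := by push_cast; ring
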